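/- Over an algebraically closed field of characteristic ≠ 2, let D be the determinant of the generic symmetric 4×4 matrix (a_{ij}), viewed as a quartic polynomial in the 10 variables a_{ij} (i ≤ j). A point of the hypersurface D = 0 corresponding to a symmetric matrix M is a singular point of this hypersurface if and only if M has rank at most 2. -/

import Mathlib

open Matrix MvPolynomial Finset

/-- The determinant of the generic symmetric 4×4 matrix, a quartic polynomial in the 10
variables a_{ij}, i ≤ j. -/
noncomputable def genSymDet (k : Type*) [Field k] :
    MvPolynomial {p : Fin 4 × Fin 4 // p.1 ≤ p.2} k :=
  (Matrix.of fun i j : Fin 4 =>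
    if h : i ≤ j then MvPolynomial.X ⟨(i, j), h⟩
    else MvPolynomial.X ⟨(j, i), le_of_not_ge h⟩).det

def vv (i j : Fin 4) (h : i ≤ j := by decide) : {p : Fin 4 × Fin 4 // p.1 ≤ p.2} := ⟨(i,j),h⟩

set_option maxHeartbeats 1000000 in
theorem det_fin_four' {R : Type*} [CommRing R] (A : Matrix (Fin 4) (Fin 4) R) :
    det A = A 0 0*A 1 1*A 2 2*A 3 3 - A 0 0*A 1 1*A 2 3*A 3 2 - A 0 0*A 1 2*A 2 1*A 3 3 + A 0 0*A 1 2*A 2 3*A 3 1 + A 0 0*A 1 3*A 2 1*A 3 2 - A 0 0*A 1 3*A 2 2*A 3 1 - A 0 1*A 1 0*A 2 2*A 3 3 + A 0 1*A 1 0*A 2 3*A 3 2 + A 0 1*A 1 2*A 2 0*A 3 3 - A 0 1*A 1 2*A 2 3*A 3 0 - A 0 1*A 1 3*A 2 0*A 3 2 + A 0 1*A 1 3*A 2 2*A 3 0 + A 0 2*A 1 0*A 2 1*A 3 3 - A 0 2*A 1 0*A 2 3*A 3 1 - A 0 2*A 1 1*A 2 0*A 3 3 + A 0 2*A 1 1*A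 2 3*A 3 0 + A 0 2*A 1 3*A 2 0*A 3 1 - A 0 2*A 1 3*A 2 1*A 3 0 - A 0 3*A 1 0*A 2 1*A 3 2 + A 0 3*A 1 0*A 2 2*A 3 1 + A 0 3*A 1 1*A 2 0*A 3 2 - A 0 3*A 1 1*A 2 2*A 3 0 - A 0 3*A 1 2*A 2 0*A 3 1 + A 0 3*A 1 2*A 2 1*A 3 0 := by
  rw [Matrix.det_succ_row_zero]
  simp only [Fin.sum_univ_succ, Fin.sum_univ_zero, det_fin_three, submatrix_apply]
  norm_num [Fin.succAbove, Fin.lt_def]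
  simp only [show (Fin.succ 2 : Fin 4) = 3 from rfl, show ((2 : Fin 3).castSucc : Fin 4) = 2 from rfl]
  ring

set_option maxHeartbeats 1000000 in
theorem genSymDet_eq (k : Type*) [Field k] : genSymDet k =
    X (vv 0 0)*X (vv 1 1)*X (vv 2 2)*X (vv 3 3) - X (vv 0 0)*X (vv 1 1)*X (vv 2 3)*X (vv 2 3) - X (vv 0 0)*X (vv 1 2)*X (vv 1 2)*X (vv 3 3) + X (vv 0 0)*X (vv 1 2)*X (vv 1 3)*X (vv 2 3) + X (vv 0 0)*X (vv 1 2)*X (vv 1 3)*X (vv 2 3) - X (vv 0 0)*X (vv 1 3)*X (vv 1 3)*X (vv 2 2) - X (vv 0 1)*X (vv 0 1)*X (vv 2 2)*X (vv 3 3) + X (vv 0 1)*X (vv 0 1)*X (vv 2 3)*X (vv 2 3) + X (vv 0 1)*X (vv 0 2)*X (vv 1 2)*X (vv 3 3) + X (vv 0 1)*X (vv 0 2)*X (vv 1 2)*X (vv 3 3) - X (vv 0 1)*X (vv 0 2)*X (vv 1 3)*X (vv 2 3) - X (vv 0 1)*X (vv 0 2)*X (vv 1 3)*X (vv 2 3)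 - X (vv 0 1)*X (vv 0 3)*X (vv 1 2)*X (vv 2 3) - X (vv 0 1)*X (vv 0 3)*X (vv 1 2)*X (vv 2 3) + X (vv 0 1)*X (vv 0 3)*X (vv 1 3)*X (vv 2 2) + X (vv 0 1)*X (vv 0 3)*X (vv 1 3)*X (vv 2 2) - X (vv 0 2)*X (vv 0 2)*X (vv 1 1)*X (vv 3 3) + X (vv 0 2)*X (vv 0 2)*X (vv 1 3)*X (vv 1 3) + X (vv 0 2)*X (vv 0 3)*X (vv 1 1)*X (vv 2 3) + X (vv 0 2)*X (vv 0 3)*X (vv 1 1)*X (vv 2 3) - X (vv 0 2)*X (vv 0 3)*X (vv 1 2)*X (vv 1 3) - X (vv 0 2)*X (vv 0 3)*X (vv 1 2)*X (vv 1 3) - X (vv 0 3)*X (vv 0 3)*X (vv 1 1)*X (vv 2 2) + X (vv 0 3)*X (vv 0 3)*X (vv 1 2)*X (vv 1 2) := by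
  rw [genSymDet, det_fin_four']
  simp only [show (Matrix.of fun i j : Fin 4 => if h : i ≤ j then (X ⟨(i, j), h⟩ : MvPolynomial {p : Fin 4 × Fin 4 // p.1 ≤ p.2} k) else X ⟨(j, i), le_of_not_ge h⟩) 0 0 = X (vv 0 0) from rfl,
    show (Matrix.of fun i j : Fin 4 => if h : i ≤ j then (X ⟨(i, j), h⟩ : MvPolynomial {p : Fin 4 × Fin 4 // p.1 ≤ p.2} k) else X ⟨(j, i), le_of_not_ge h⟩) 0 1 = X (vv 0 1) from rfl,
    show (Matrix.of fun i j : Fin 4 => if h : i ≤ j then (X ⟨(i, j), h⟩ : MvPolynomial {p : Fin 4 × Fin 4 // p.1 ≤ p.2} k) else X ⟨(j, i), le_of_not_ge h⟩) 0 2 = X (vv 0 2) from rfl,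
    show (Matrix.of fun i j : Fin 4 => if h : i ≤ j then (X ⟨(i, j), h⟩ : MvPolynomial {p : Fin 4 × Fin 4 // p.1 ≤ p.2} k) else X ⟨(j, i), le_of_not_ge h⟩) 0 3 = X (vv 0 3) from rfl,
    show (Matrix.of fun i j : Fin 4 => if h : i ≤ j then (X ⟨(i, j), h⟩ : MvPolynomial {p : Fin 4 × Fin 4 // p.1 ≤ p.2} k) else X ⟨(j, i), le_of_not_ge h⟩) 1 0 = X (vv 0 1) from rfl,
    show (Matrix.of fun i j : Fin 4 => if h : i ≤ j then (X ⟨(i, j), h⟩ : MvPolynomial {p : Fin 4 × Fin 4 // p.1 ≤ p.2} k) else X ⟨(j, i), le_of_not_ge h⟩) 1 1 = X (vv 1 1) from rfl,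
    show (Matrix.of fun i j : Fin 4 => if h : i ≤ j then (X ⟨(i, j), h⟩ : MvPolynomial {p : Fin 4 × Fin 4 // p.1 ≤ p.2} k) else X ⟨(j, i), le_of_not_ge h⟩) 1 2 = X (vv 1 2) from rfl,
    show (Matrix.of fun i j : Fin 4 => if h : i ≤ j then (X ⟨(i, j), h⟩ : MvPolynomial {p : Fin 4 × Fin 4 // p.1 ≤ p.2} k) else X ⟨(j, i), le_of_not_ge h⟩) 1 3 = X (vv 1 3) from rfl,
    show (Matrix.of fun i j : Fin 4 => if h : i ≤ j then (X ⟨(i, j), h⟩ : MvPolynomial {p : Fin 4 × Fin 4 // p.1 ≤ p.2} k) else X ⟨(j, i), le_of_not_ge h⟩) 2 0 = X (vv 0 2) from rfl,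
    show (Matrix.of fun i j : Fin 4 => if h : i ≤ j then (X ⟨(i, j), h⟩ : MvPolynomial {p : Fin 4 × Fin 4 // p.1 ≤ p.2} k) else X ⟨(j, i), le_of_not_ge h⟩) 2 1 = X (vv 1 2) from rfl,
    show (Matrix.of fun i j : Fin 4 => if h : i ≤ j then (X ⟨(i, j), h⟩ : MvPolynomial {p : Fin 4 × Fin 4 // p.1 ≤ p.2} k) else X ⟨(j, i), le_of_not_ge h⟩) 2 2 = X (vv 2 2) from rfl,
    show (Matrix.of fun i j : Fin 4 => if h : i ≤ j then (X ⟨(i, j), h⟩ : MvPolynomial {p : Fin 4 × Fin 4 // p.1 ≤ p.2} k) else X ⟨(j, i), le_of_not_ge h⟩) 2 3 = X (vv 2 3) from rfl,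
    show (Matrix.of fun i j : Fin 4 => if h : i ≤ j then (X ⟨(i, j), h⟩ : MvPolynomial {p : Fin 4 × Fin 4 // p.1 ≤ p.2} k) else X ⟨(j, i), le_of_not_ge h⟩) 3 0 = X (vv 0 3) from rfl,
    show (Matrix.of fun i j : Fin 4 => if h : i ≤ j then (X ⟨(i, j), h⟩ : MvPolynomial {p : Fin 4 × Fin 4 // p.1 ≤ p.2} k) else X ⟨(j, i), le_of_not_ge h⟩) 3 1 = X (vv 1 3) from rfl,
    show (Matrix.of fun i j : Fin 4 => if h : i ≤ j then (X ⟨(i, j), h⟩ : MvPolynomial {p : Fin 4 × Fin 4 // p.1 ≤ p.2} k) else X ⟨(j, i), le_of_not_ge h⟩) 3 2 = X (vv 2 3) from rfl,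
    show (Matrix.of fun i j : Fin 4 => if h : i ≤ j then (X ⟨(i, j), h⟩ : MvPolynomial {p : Fin 4 × Fin 4 // p.1 ≤ p.2} k) else X ⟨(j, i), le_of_not_ge h⟩) 3 3 = X (vv 3 3) from rfl]
  ring


section Rank
variable {k : Type*} [Field k]

lemma diag_adj_iff (D : Fin 4 → k) :
    adjugate (diagonal D) = 0 ↔ (diagonal D).rank ≤ 2 := by
  classical
  rw [adjugate_diagonal, Matrix.rank_diagonal, ← diagonal_zero,
    diagonal_eq_diagonal_iff, Fintype.card_subtype]
  constructor
  · intro h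
    -- each i: product over erase i is zero, so exists j ≠ i with D j = 0
    have hz : ∀ i : Fin 4, ∃ j ∈ Finset.univ.erase i, D j = 0 := by
      intro i
      have := h i
      exact Finset.prod_eq_zero_iff.mp this
    -- get two distinct zeros
    obtain ⟨j0, hj0mem, hj0⟩ := hz 0
    obtain ⟨j1, hj1mem, hj1⟩ := hz j0
    have hne : j1 ≠ j0 := (Finset.mem_erase.mp hj1mem).1
    have hsub : Finset.univ.filter (fun i => D i ≠ 0) ⊆ (Finset.univ.erase j0).erase j1 := by
      intro x hx
      simp only [Finset.mem_filter] at hx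
      refine Finset.mem_erase.mpr ⟨?_, Finset.mem_erase.mpr ⟨?_, Finset.mem_univ _⟩⟩
      · rintro rfl; exact hx.2 hj1
      · rintro rfl; exact hx.2 hj0
    calc (Finset.univ.filter (fun i => D i ≠ 0)).card
        ≤ ((Finset.univ.erase j0).erase j1).card := Finset.card_le_card hsub
      _ ≤ 2 := by
          rw [Finset.card_erase_of_mem (Finset.mem_erase.mpr ⟨hne, Finset.mem_univ _⟩),
            Finset.card_erase_of_mem (Finset.mem_univ _)]
          simp
  · intro h i
    apply Finset.prod_eq_zero_iff.mpr
    by_contra hcon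
    push_neg at hcon
    have hsub : Finset.univ.erase i ⊆ Finset.univ.filter (fun j => D j ≠ 0) := by
      intro x hx
      exact Finset.mem_filter.mpr ⟨Finset.mem_univ _, hcon x hx⟩
    have := Finset.card_le_card hsub
    rw [Finset.card_erase_of_mem (Finset.mem_univ _)] at this
    simp only [Finset.card_univ, Fintype.card_fin] at this
    have h2 : (Finset.univ.filter (fun j => ¬ D j = 0)).card
        = (Finset.univ.filter (fun i => D i ≠ 0)).card := by
      congr 1
    omega

lemma rank_unit_mul {n : Type*} [Fintype n] [DecidableEq n] (P A : Matrix n n k)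
    (hP : IsUnit P) : (P * A).rank = A.rank := by
  obtain ⟨u, rfl⟩ := hP
  apply le_antisymm (Matrix.rank_mul_le_right _ _)
  have : A = (↑u⁻¹ : Matrix n n k) * ((u : Matrix n n k) * A) := by
    rw [← Matrix.mul_assoc, Units.inv_mul, Matrix.one_mul]
  conv_lhs => rw [this]
  exact Matrix.rank_mul_le_right _ _

lemma rank_mul_unit' {n : Type*} [Fintype n] [DecidableEq n] (A Q : Matrix n n k)
    (hQ : IsUnit Q) : (A * Q).rank = A.rank := by
  obtain ⟨u, rfl⟩ := hQ
  apply le_antisymm (Matrix.rank_mul_le_left _ _)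
  have : A = ((A * u) : Matrix n n k) * (↑u⁻¹ : Matrix n n k) := by
    rw [Matrix.mul_assoc, Units.mul_inv, Matrix.mul_one]
  conv_lhs => rw [this]
  exact Matrix.rank_mul_le_left _ _

lemma unit_mul_eq_zero {n : Type*} [Fintype n] [DecidableEq n] (P X : Matrix n n k)
    (hP : IsUnit P) : P * X = 0 ↔ X = 0 := by
  obtain ⟨u, rfl⟩ := hP
  constructor
  · intro h
    have := congrArg (fun Y => (↑u⁻¹ : Matrix n n k) * Y) h
    rw [← Matrix.mul_assoc, Units.inv_mul, Matrix.one_mul] at this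
    rw [this, Matrix.mul_zero]
  · rintro rfl; simp

lemma mul_unit_eq_zero {n : Type*} [Fintype n] [DecidableEq n] (X Q : Matrix n n k)
    (hQ : IsUnit Q) : X * Q = 0 ↔ X = 0 := by
  obtain ⟨u, rfl⟩ := hQ
  constructor
  · intro h
    have := congrArg (fun Y => Y * (↑u⁻¹ : Matrix n n k)) h
    rw [Matrix.mul_assoc, Units.mul_inv, Matrix.mul_one] at this
    rw [this, Matrix.zero_mul]
  · rintro rfl; simp

lemma adj_zero_iff_rank (A : Matrix (Fin 4) (Fin 4) k) :
    adjugate A = 0 ↔ A.rank ≤ 2 := by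
  classical
  obtain ⟨L, L', D, hA⟩ := Pivot.exists_list_transvec_mul_diagonal_mul_list_transvec A
  set P := (L.map Matrix.TransvectionStruct.toMatrix).prod with hP
  set Q := (L'.map Matrix.TransvectionStruct.toMatrix).prod with hQ
  have hPu : IsUnit P := by
    rw [Matrix.isUnit_iff_isUnit_det, TransvectionStruct.det_toMatrix_prod]; exact isUnit_one
  have hQu : IsUnit Q := by
    rw [Matrix.isUnit_iff_isUnit_det, TransvectionStruct.det_toMatrix_prod]; exact isUnit_one
  have hadjP : IsUnit (adjugate P) := by
    rw [Matrix.isUnit_iff_isUnit_det, Matrix.det_adjugate, TransvectionStruct.det_toMatrix_prod]; simp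
  have hadjQ : IsUnit (adjugate Q) := by
    rw [Matrix.isUnit_iff_isUnit_det, Matrix.det_adjugate, TransvectionStruct.det_toMatrix_prod]; simp
  rw [hA]
  rw [rank_mul_unit' _ _ hQu, rank_unit_mul _ _ hPu]
  rw [Matrix.adjugate_mul_distrib, Matrix.adjugate_mul_distrib, ← Matrix.mul_assoc]
  rw [mul_unit_eq_zero _ _ hadjP, unit_mul_eq_zero _ _ hadjQ]
  exact diag_adj_iff D

end Rank


set_option maxHeartbeats 4000000 in
lemma lemma2 {k : Type*} [Field k] (hchar : (2 : k) ≠ 0)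
    (M : Matrix (Fin 4) (Fin 4) k) (hsym : M.IsSymm) :
    (∀ s : {p : Fin 4 × Fin 4 // p.1 ≤ p.2},
        MvPolynomial.eval (fun q : {p : Fin 4 × Fin 4 // p.1 ≤ p.2} => M q.1.1 q.1.2)
          (MvPolynomial.pderiv s (genSymDet k)) = 0)
      ↔ adjugate M = 0 := by
  have a00 : adjugate M 0 0 = M 1 1*M 2 2*M 3 3 - M 1 1*M 2 3*M 2 3 - M 1 2*M 1 2*M 3 3 + 2*M 1 2*M 1 3*M 2 3 - M 1 3*M 1 3*M 2 2 := by
    rw [show (adjugate M 0 0 : k) = adjugate M 0 0 from rfl,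
      adjugate_fin_succ_eq_det_submatrix, det_fin_three]
    simp only [Matrix.submatrix_apply,
    show ((0:Fin 4).succAbove 0) = 1 from rfl, show ((0:Fin 4).succAbove 1) = 2 from rfl, show ((0:Fin 4).succAbove 2) = 3 from rfl, show ((1:Fin 4).succAbove 0) = 0 from rfl, show ((1:Fin 4).succAbove 1) = 2 from rfl, show ((1:Fin 4).succAbove 2) = 3 from rfl, show ((2:Fin 4).succAbove 0) = 0 from rfl, show ((2:Fin 4).succAbove 1) = 1 from rfl, show ((2:Fin 4).succAbove 2) = 3 from rfl, show ((3:Fin 4).succAbove 0) = 0 from rfl, show ((3:Fin 4).succAbove 1) = 1 from rfl, show ((3:Fin 4).succAbove 2) = 2 from rfl,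
    show (((0:Fin 4)):ℕ) = 0 from rfl, show (((1:Fin 4)):ℕ) = 1 from rfl, show (((2:Fin 4)):ℕ) = 2 from rfl, show (((3:Fin 4)):ℕ) = 3 from rfl,
    hsym.apply 0 1, hsym.apply 0 2, hsym.apply 0 3, hsym.apply 1 2, hsym.apply 1 3, hsym.apply 2 3]
    norm_num
    try ring
  have a01 : adjugate M 0 1 = -M 0 1*M 2 2*M 3 3 + M 0 1*M 2 3*M 2 3 + M 0 2*M 1 2*M 3 3 - M 0 2*M 1 3*M 2 3 - M 0 3*M 1 2*M 2 3 + M 0 3*M 1 3*M 2 2 := by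
    rw [show (adjugate M 0 1 : k) = adjugate M 0 1 from rfl,
      adjugate_fin_succ_eq_det_submatrix, det_fin_three]
    simp only [Matrix.submatrix_apply,
    show ((0:Fin 4).succAbove 0) = 1 from rfl, show ((0:Fin 4).succAbove 1) = 2 from rfl, show ((0:Fin 4).succAbove 2) = 3 from rfl, show ((1:Fin 4).succAbove 0) = 0 from rfl, show ((1:Fin 4).succAbove 1) = 2 from rfl, show ((1:Fin 4).succAbove 2) = 3 from rfl, show ((2:Fin 4).succAbove 0) = 0 from rfl, show ((2:Fin 4).succAbove 1) = 1 from rfl, show ((2:Fin 4).succAbove 2) = 3 from rfl, show ((3:Fin 4).succAbove 0) = 0 from rfl, show ((3:Fin 4).succAbove 1) = 1 from rfl, show ((3:Fin 4).succAbove 2) = 2 from rfl,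
    show (((0:Fin 4)):ℕ) = 0 from rfl, show (((1:Fin 4)):ℕ) = 1 from rfl, show (((2:Fin 4)):ℕ) = 2 from rfl, show (((3:Fin 4)):ℕ) = 3 from rfl,
    hsym.apply 0 1, hsym.apply 0 2, hsym.apply 0 3, hsym.apply 1 2, hsym.apply 1 3, hsym.apply 2 3]
    norm_num
    try ring
  have a02 : adjugate M 0 2 = M 0 1*M 1 2*M 3 3 - M 0 1*M 1 3*M 2 3 - M 0 2*M 1 1*M 3 3 + M 0 2*M 1 3*M 1 3 + M 0 3*M 1 1*M 2 3 - M 0 3*M 1 2*M 1 3 := by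
    rw [show (adjugate M 0 2 : k) = adjugate M 0 2 from rfl,
      adjugate_fin_succ_eq_det_submatrix, det_fin_three]
    simp only [Matrix.submatrix_apply,
    show ((0:Fin 4).succAbove 0) = 1 from rfl, show ((0:Fin 4).succAbove 1) = 2 from rfl, show ((0:Fin 4).succAbove 2) = 3 from rfl, show ((1:Fin 4).succAbove 0) = 0 from rfl, show ((1:Fin 4).succAbove 1) = 2 from rfl, show ((1:Fin 4).succAbove 2) = 3 from rfl, show ((2:Fin 4).succAbove 0) = 0 from rfl, show ((2:Fin 4).succAbove 1) = 1 from rfl, show ((2:Fin 4).succAbove 2) = 3 from rfl, show ((3:Fin 4).succAbove 0) = 0 from rfl, show ((3:Fin 4).succAbove 1) = 1 from rfl, show ((3:Fin 4).succAbove 2) = 2 from rfl,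
    show (((0:Fin 4)):ℕ) = 0 from rfl, show (((1:Fin 4)):ℕ) = 1 from rfl, show (((2:Fin 4)):ℕ) = 2 from rfl, show (((3:Fin 4)):ℕ) = 3 from rfl,
    hsym.apply 0 1, hsym.apply 0 2, hsym.apply 0 3, hsym.apply 1 2, hsym.apply 1 3, hsym.apply 2 3]
    norm_num
    try ring
  have a03 : adjugate M 0 3 = -M 0 1*M 1 2*M 2 3 + M 0 1*M 1 3*M 2 2 + M 0 2*M 1 1*M 2 3 - M 0 2*M 1 2*M 1 3 - M 0 3*M 1 1*M 2 2 + M 0 3*M 1 2*M 1 2 := by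
    rw [show (adjugate M 0 3 : k) = adjugate M 0 3 from rfl,
      adjugate_fin_succ_eq_det_submatrix, det_fin_three]
    simp only [Matrix.submatrix_apply,
    show ((0:Fin 4).succAbove 0) = 1 from rfl, show ((0:Fin 4).succAbove 1) = 2 from rfl, show ((0:Fin 4).succAbove 2) = 3 from rfl, show ((1:Fin 4).succAbove 0) = 0 from rfl, show ((1:Fin 4).succAbove 1) = 2 from rfl, show ((1:Fin 4).succAbove 2) = 3 from rfl, show ((2:Fin 4).succAbove 0) = 0 from rfl, show ((2:Fin 4).succAbove 1) = 1 from rfl, show ((2:Fin 4).succAbove 2) = 3 from rfl, show ((3:Fin 4).succAbove 0) = 0 from rfl, show ((3:Fin 4).succAbove 1) = 1 from rfl, show ((3:Fin 4).succAbove 2) = 2 from rfl,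
    show (((0:Fin 4)):ℕ) = 0 from rfl, show (((1:Fin 4)):ℕ) = 1 from rfl, show (((2:Fin 4)):ℕ) = 2 from rfl, show (((3:Fin 4)):ℕ) = 3 from rfl,
    hsym.apply 0 1, hsym.apply 0 2, hsym.apply 0 3, hsym.apply 1 2, hsym.apply 1 3, hsym.apply 2 3]
    norm_num
    try ring
  have a11 : adjugate M 1 1 = M 0 0*M 2 2*M 3 3 - M 0 0*M 2 3*M 2 3 - M 0 2*M 0 2*M 3 3 + 2*M 0 2*M 0 3*M 2 3 - M 0 3*M 0 3*M 2 2 := by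
    rw [show (adjugate M 1 1 : k) = adjugate M 1 1 from rfl,
      adjugate_fin_succ_eq_det_submatrix, det_fin_three]
    simp only [Matrix.submatrix_apply,
    show ((0:Fin 4).succAbove 0) = 1 from rfl, show ((0:Fin 4).succAbove 1) = 2 from rfl, show ((0:Fin 4).succAbove 2) = 3 from rfl, show ((1:Fin 4).succAbove 0) = 0 from rfl, show ((1:Fin 4).succAbove 1) = 2 from rfl, show ((1:Fin 4).succAbove 2) = 3 from rfl, show ((2:Fin 4).succAbove 0) = 0 from rfl, show ((2:Fin 4).succAbove 1) = 1 from rfl, show ((2:Fin 4).succAbove 2) = 3 from rfl, show ((3:Fin 4).succAbove 0) = 0 from rfl, show ((3:Fin 4).succAbove 1) = 1 from rfl, show ((3:Fin 4).succAbove 2) = 2 from rfl,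
    show (((0:Fin 4)):ℕ) = 0 from rfl, show (((1:Fin 4)):ℕ) = 1 from rfl, show (((2:Fin 4)):ℕ) = 2 from rfl, show (((3:Fin 4)):ℕ) = 3 from rfl,
    hsym.apply 0 1, hsym.apply 0 2, hsym.apply 0 3, hsym.apply 1 2, hsym.apply 1 3, hsym.apply 2 3]
    norm_num
    try ring
  have a12 : adjugate M 1 2 = -M 0 0*M 1 2*M 3 3 + M 0 0*M 1 3*M 2 3 + M 0 1*M 0 2*M 3 3 - M 0 1*M 0 3*M 2 3 - M 0 2*M 0 3*M 1 3 + M 0 3*M 0 3*M 1 2 := by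
    rw [show (adjugate M 1 2 : k) = adjugate M 1 2 from rfl,
      adjugate_fin_succ_eq_det_submatrix, det_fin_three]
    simp only [Matrix.submatrix_apply,
    show ((0:Fin 4).succAbove 0) = 1 from rfl, show ((0:Fin 4).succAbove 1) = 2 from rfl, show ((0:Fin 4).succAbove 2) = 3 from rfl, show ((1:Fin 4).succAbove 0) = 0 from rfl, show ((1:Fin 4).succAbove 1) = 2 from rfl, show ((1:Fin 4).succAbove 2) = 3 from rfl, show ((2:Fin 4).succAbove 0) = 0 from rfl, show ((2:Fin 4).succAbove 1) = 1 from rfl, show ((2:Fin 4).succAbove 2) = 3 from rfl, show ((3:Fin 4).succAbove 0) = 0 from rfl, show ((3:Fin 4).succAbove 1) = 1 from rfl, show ((3:Fin 4).succAbove 2) = 2 from rfl,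
    show (((0:Fin 4)):ℕ) = 0 from rfl, show (((1:Fin 4)):ℕ) = 1 from rfl, show (((2:Fin 4)):ℕ) = 2 from rfl, show (((3:Fin 4)):ℕ) = 3 from rfl,
    hsym.apply 0 1, hsym.apply 0 2, hsym.apply 0 3, hsym.apply 1 2, hsym.apply 1 3, hsym.apply 2 3]
    norm_num
    try ring
  have a13 : adjugate M 1 3 = M 0 0*M 1 2*M 2 3 - M 0 0*M 1 3*M 2 2 - M 0 1*M 0 2*M 2 3 + M 0 1*M 0 3*M 2 2 + M 0 2*M 0 2*M 1 3 - M 0 2*M 0 3*M 1 2 := by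
    rw [show (adjugate M 1 3 : k) = adjugate M 1 3 from rfl,
      adjugate_fin_succ_eq_det_submatrix, det_fin_three]
    simp only [Matrix.submatrix_apply,
    show ((0:Fin 4).succAbove 0) = 1 from rfl, show ((0:Fin 4).succAbove 1) = 2 from rfl, show ((0:Fin 4).succAbove 2) = 3 from rfl, show ((1:Fin 4).succAbove 0) = 0 from rfl, show ((1:Fin 4).succAbove 1) = 2 from rfl, show ((1:Fin 4).succAbove 2) = 3 from rfl, show ((2:Fin 4).succAbove 0) = 0 from rfl, show ((2:Fin 4).succAbove 1) = 1 from rfl, show ((2:Fin 4).succAbove 2) = 3 from rfl, show ((3:Fin 4).succAbove 0) = 0 from rfl, show ((3:Fin 4).succAbove 1) = 1 from rfl, show ((3:Fin 4).succAbove 2) = 2 from rfl,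
    show (((0:Fin 4)):ℕ) = 0 from rfl, show (((1:Fin 4)):ℕ) = 1 from rfl, show (((2:Fin 4)):ℕ) = 2 from rfl, show (((3:Fin 4)):ℕ) = 3 from rfl,
    hsym.apply 0 1, hsym.apply 0 2, hsym.apply 0 3, hsym.apply 1 2, hsym.apply 1 3, hsym.apply 2 3]
    norm_num
    try ring
  have a22 : adjugate M 2 2 = M 0 0*M 1 1*M 3 3 - M 0 0*M 1 3*M 1 3 - M 0 1*M 0 1*M 3 3 + 2*M 0 1*M 0 3*M 1 3 - M 0 3*M 0 3*M 1 1 := by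
    rw [show (adjugate M 2 2 : k) = adjugate M 2 2 from rfl,
      adjugate_fin_succ_eq_det_submatrix, det_fin_three]
    simp only [Matrix.submatrix_apply,
    show ((0:Fin 4).succAbove 0) = 1 from rfl, show ((0:Fin 4).succAbove 1) = 2 from rfl, show ((0:Fin 4).succAbove 2) = 3 from rfl, show ((1:Fin 4).succAbove 0) = 0 from rfl, show ((1:Fin 4).succAbove 1) = 2 from rfl, show ((1:Fin 4).succAbove 2) = 3 from rfl, show ((2:Fin 4).succAbove 0) = 0 from rfl, show ((2:Fin 4).succAbove 1) = 1 from rfl, show ((2:Fin 4).succAbove 2) = 3 from rfl, show ((3:Fin 4).succAbove 0) = 0 from rfl, show ((3:Fin 4).succAbove 1) = 1 from rfl, show ((3:Fin 4).succAbove 2) = 2 from rfl,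
    show (((0:Fin 4)):ℕ) = 0 from rfl, show (((1:Fin 4)):ℕ) = 1 from rfl, show (((2:Fin 4)):ℕ) = 2 from rfl, show (((3:Fin 4)):ℕ) = 3 from rfl,
    hsym.apply 0 1, hsym.apply 0 2, hsym.apply 0 3, hsym.apply 1 2, hsym.apply 1 3, hsym.apply 2 3]
    norm_num
    try ring
  have a23 : adjugate M 2 3 = -M 0 0*M 1 1*M 2 3 + M 0 0*M 1 2*M 1 3 + M 0 1*M 0 1*M 2 3 - M 0 1*M 0 2*M 1 3 - M 0 1*M 0 3*M 1 2 + M 0 2*M 0 3*M 1 1 := by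
    rw [show (adjugate M 2 3 : k) = adjugate M 2 3 from rfl,
      adjugate_fin_succ_eq_det_submatrix, det_fin_three]
    simp only [Matrix.submatrix_apply,
    show ((0:Fin 4).succAbove 0) = 1 from rfl, show ((0:Fin 4).succAbove 1) = 2 from rfl, show ((0:Fin 4).succAbove 2) = 3 from rfl, show ((1:Fin 4).succAbove 0) = 0 from rfl, show ((1:Fin 4).succAbove 1) = 2 from rfl, show ((1:Fin 4).succAbove 2) = 3 from rfl, show ((2:Fin 4).succAbove 0) = 0 from rfl, show ((2:Fin 4).succAbove 1) = 1 from rfl, show ((2:Fin 4).succAbove 2) = 3 from rfl, show ((3:Fin 4).succAbove 0) = 0 from rfl, show ((3:Fin 4).succAbove 1) = 1 from rfl, show ((3:Fin 4).succAbove 2) = 2 from rfl,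
    show (((0:Fin 4)):ℕ) = 0 from rfl, show (((1:Fin 4)):ℕ) = 1 from rfl, show (((2:Fin 4)):ℕ) = 2 from rfl, show (((3:Fin 4)):ℕ) = 3 from rfl,
    hsym.apply 0 1, hsym.apply 0 2, hsym.apply 0 3, hsym.apply 1 2, hsym.apply 1 3, hsym.apply 2 3]
    norm_num
    try ring
  have a33 : adjugate M 3 3 = M 0 0*M 1 1*M 2 2 - M 0 0*M 1 2*M 1 2 - M 0 1*M 0 1*M 2 2 + 2*M 0 1*M 0 2*M 1 2 - M 0 2*M 0 2*M 1 1 := by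
    rw [show (adjugate M 3 3 : k) = adjugate M 3 3 from rfl,
      adjugate_fin_succ_eq_det_submatrix, det_fin_three]
    simp only [Matrix.submatrix_apply,
    show ((0:Fin 4).succAbove 0) = 1 from rfl, show ((0:Fin 4).succAbove 1) = 2 from rfl, show ((0:Fin 4).succAbove 2) = 3 from rfl, show ((1:Fin 4).succAbove 0) = 0 from rfl, show ((1:Fin 4).succAbove 1) = 2 from rfl, show ((1:Fin 4).succAbove 2) = 3 from rfl, show ((2:Fin 4).succAbove 0) = 0 from rfl, show ((2:Fin 4).succAbove 1) = 1 from rfl, show ((2:Fin 4).succAbove 2) = 3 from rfl, show ((3:Fin 4).succAbove 0) = 0 from rfl, show ((3:Fin 4).succAbove 1) = 1 from rfl, show ((3:Fin 4).succAbove 2) = 2 from rfl,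
    show (((0:Fin 4)):ℕ) = 0 from rfl, show (((1:Fin 4)):ℕ) = 1 from rfl, show (((2:Fin 4)):ℕ) = 2 from rfl, show (((3:Fin 4)):ℕ) = 3 from rfl,
    hsym.apply 0 1, hsym.apply 0 2, hsym.apply 0 3, hsym.apply 1 2, hsym.apply 1 3, hsym.apply 2 3]
    norm_num
    try ring
  have d00 : MvPolynomial.eval (fun q : {p : Fin 4 × Fin 4 // p.1 ≤ p.2} => M q.1.1 q.1.2)
      (MvPolynomial.pderiv (vv 0 0) (genSymDet k)) = (M 1 1*M 2 2*M 3 3 - M 1 1*M 2 3*M 2 3 - M 1 2*M 1 2*M 3 3 + 2*M 1 2*M 1 3*M 2 3 - M 1 3*M 1 3*M 2 2) := by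
    rw [genSymDet_eq]
    simp [pderiv_mul, pderiv_X, Pi.single_apply, vv]
    ring
  have d01 : MvPolynomial.eval (fun q : {p : Fin 4 × Fin 4 // p.1 ≤ p.2} => M q.1.1 q.1.2)
      (MvPolynomial.pderiv (vv 0 1) (genSymDet k)) = 2*(-M 0 1*M 2 2*M 3 3 + M 0 1*M 2 3*M 2 3 + M 0 2*M 1 2*M 3 3 - M 0 2*M 1 3*M 2 3 - M 0 3*M 1 2*M 2 3 + M 0 3*M 1 3*M 2 2) := by
    rw [genSymDet_eq]
    simp [pderiv_mul, pderiv_X, Pi.single_apply, vv]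
    ring
  have d02 : MvPolynomial.eval (fun q : {p : Fin 4 × Fin 4 // p.1 ≤ p.2} => M q.1.1 q.1.2)
      (MvPolynomial.pderiv (vv 0 2) (genSymDet k)) = 2*(M 0 1*M 1 2*M 3 3 - M 0 1*M 1 3*M 2 3 - M 0 2*M 1 1*M 3 3 + M 0 2*M 1 3*M 1 3 + M 0 3*M 1 1*M 2 3 - M 0 3*M 1 2*M 1 3) := by
    rw [genSymDet_eq]
    simp [pderiv_mul, pderiv_X, Pi.single_apply, vv]
    ring
  have d03 : MvPolynomial.eval (fun q : {p : Fin 4 × Fin 4 // p.1 ≤ p.2} => M q.1.1 q.1.2)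
      (MvPolynomial.pderiv (vv 0 3) (genSymDet k)) = 2*(-M 0 1*M 1 2*M 2 3 + M 0 1*M 1 3*M 2 2 + M 0 2*M 1 1*M 2 3 - M 0 2*M 1 2*M 1 3 - M 0 3*M 1 1*M 2 2 + M 0 3*M 1 2*M 1 2) := by
    rw [genSymDet_eq]
    simp [pderiv_mul, pderiv_X, Pi.single_apply, vv]
    ring
  have d11 : MvPolynomial.eval (fun q : {p : Fin 4 × Fin 4 // p.1 ≤ p.2} => M q.1.1 q.1.2)
      (MvPolynomial.pderiv (vv 1 1) (genSymDet k)) = (M 0 0*M 2 2*M 3 3 - M 0 0*M 2 3*M 2 3 - M 0 2*M 0 2*M 3 3 + 2*M 0 2*M 0 3*M 2 3 - M 0 3*M 0 3*M 2 2) := by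
    rw [genSymDet_eq]
    simp [pderiv_mul, pderiv_X, Pi.single_apply, vv]
    ring
  have d12 : MvPolynomial.eval (fun q : {p : Fin 4 × Fin 4 // p.1 ≤ p.2} => M q.1.1 q.1.2)
      (MvPolynomial.pderiv (vv 1 2) (genSymDet k)) = 2*(-M 0 0*M 1 2*M 3 3 + M 0 0*M 1 3*M 2 3 + M 0 1*M 0 2*M 3 3 - M 0 1*M 0 3*M 2 3 - M 0 2*M 0 3*M 1 3 + M 0 3*M 0 3*M 1 2) := by
    rw [genSymDet_eq]
    simp [pderiv_mul, pderiv_X, Pi.single_apply, vv]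
    ring
  have d13 : MvPolynomial.eval (fun q : {p : Fin 4 × Fin 4 // p.1 ≤ p.2} => M q.1.1 q.1.2)
      (MvPolynomial.pderiv (vv 1 3) (genSymDet k)) = 2*(M 0 0*M 1 2*M 2 3 - M 0 0*M 1 3*M 2 2 - M 0 1*M 0 2*M 2 3 + M 0 1*M 0 3*M 2 2 + M 0 2*M 0 2*M 1 3 - M 0 2*M 0 3*M 1 2) := by
    rw [genSymDet_eq]
    simp [pderiv_mul, pderiv_X, Pi.single_apply, vv]
    ring
  have d22 : MvPolynomial.eval (fun q : {p : Fin 4 × Fin 4 // p.1 ≤ p.2} => M q.1.1 q.1.2)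
      (MvPolynomial.pderiv (vv 2 2) (genSymDet k)) = (M 0 0*M 1 1*M 3 3 - M 0 0*M 1 3*M 1 3 - M 0 1*M 0 1*M 3 3 + 2*M 0 1*M 0 3*M 1 3 - M 0 3*M 0 3*M 1 1) := by
    rw [genSymDet_eq]
    simp [pderiv_mul, pderiv_X, Pi.single_apply, vv]
    ring
  have d23 : MvPolynomial.eval (fun q : {p : Fin 4 × Fin 4 // p.1 ≤ p.2} => M q.1.1 q.1.2)
      (MvPolynomial.pderiv (vv 2 3) (genSymDet k)) = 2*(-M 0 0*M 1 1*M 2 3 + M 0 0*M 1 2*M 1 3 + M 0 1*M 0 1*M 2 3 - M 0 1*M 0 2*M 1 3 - M 0 1*M 0 3*M 1 2 + M 0 2*M 0 3*M 1 1) := by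
    rw [genSymDet_eq]
    simp [pderiv_mul, pderiv_X, Pi.single_apply, vv]
    ring
  have d33 : MvPolynomial.eval (fun q : {p : Fin 4 × Fin 4 // p.1 ≤ p.2} => M q.1.1 q.1.2)
      (MvPolynomial.pderiv (vv 3 3) (genSymDet k)) = (M 0 0*M 1 1*M 2 2 - M 0 0*M 1 2*M 1 2 - M 0 1*M 0 1*M 2 2 + 2*M 0 1*M 0 2*M 1 2 - M 0 2*M 0 2*M 1 1) := by
    rw [genSymDet_eq]
    simp [pderiv_mul, pderiv_X, Pi.single_apply, vv]
    ring
  constructor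
  · intro h
    have h00 := (d00.symm.trans (h (vv 0 0)))
    have h01 := (mul_eq_zero.mp (d01.symm.trans (h (vv 0 1)))).resolve_left hchar
    have h02 := (mul_eq_zero.mp (d02.symm.trans (h (vv 0 2)))).resolve_left hchar
    have h03 := (mul_eq_zero.mp (d03.symm.trans (h (vv 0 3)))).resolve_left hchar
    have h11 := (d11.symm.trans (h (vv 1 1)))
    have h12 := (mul_eq_zero.mp (d12.symm.trans (h (vv 1 2)))).resolve_left hchar
    have h13 := (mul_eq_zero.mp (d13.symm.trans (h (vv 1 3)))).resolve_left hchar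
    have h22 := (d22.symm.trans (h (vv 2 2)))
    have h23 := (mul_eq_zero.mp (d23.symm.trans (h (vv 2 3)))).resolve_left hchar
    have h33 := (d33.symm.trans (h (vv 3 3)))
    have hadjsym : (adjugate M).IsSymm := by
      rw [Matrix.IsSymm, adjugate_transpose, hsym]
    ext i j
    fin_cases i <;> fin_cases j
    · exact a00.trans h00
    · exact a01.trans h01
    · exact a02.trans h02
    · exact a03.trans h03
    · exact (hadjsym.apply 0 1).trans (a01.trans h01)
    · exact a11.trans h11
    · exact a12.trans h12
    · exact a13.trans h13
    · exact (hadjsym.apply 0 2).trans (a02.trans h02)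
    · exact (hadjsym.apply 1 2).trans (a12.trans h12)
    · exact a22.trans h22
    · exact a23.trans h23
    · exact (hadjsym.apply 0 3).trans (a03.trans h03)
    · exact (hadjsym.apply 1 3).trans (a13.trans h13)
    · exact (hadjsym.apply 2 3).trans (a23.trans h23)
    · exact a33.trans h33
  · intro h s
    obtain ⟨⟨i,j⟩,hij⟩ := s
    fin_cases i <;> fin_cases j <;> first
      | exact absurd hij (by decide)
      | exact d00.trans (by rw [← a00, h]; rfl)
      | exact d01.trans (by rw [← a01, h]; simp)
      | exact d02.trans (by rw [← a02, h]; simp)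
      | exact d03.trans (by rw [← a03, h]; simp)
      | exact d11.trans (by rw [← a11, h]; rfl)
      | exact d12.trans (by rw [← a12, h]; simp)
      | exact d13.trans (by rw [← a13, h]; simp)
      | exact d22.trans (by rw [← a22, h]; rfl)
      | exact d23.trans (by rw [← a23, h]; simp)
      | exact d33.trans (by rw [← a33, h]; rfl)


/-- Over an algebraically closed field of characteristic ≠ 2, a point of the
hypersurface D = 0 corresponding to a nonzero symmetric matrix M is a singular point
(all partial derivatives of D vanish at M) iff M has rank at most 2. -/
theorem stmt7 {k : Type*} [Field k] [IsAlgClosed k] (hchar : (2 : k) ≠ 0)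
    (M : Matrix (Fin 4) (Fin 4) k) (hsym : M.IsSymm) (hM : M ≠ 0) (hdet : M.det = 0) :
    (∀ s : {p : Fin 4 × Fin 4 // p.1 ≤ p.2},
        MvPolynomial.eval (fun q : {p : Fin 4 × Fin 4 // p.1 ≤ p.2} => M q.1.1 q.1.2)
          (MvPolynomial.pderiv s (genSymDet k)) = 0)
      ↔ M.rank ≤ 2 := by
  rw [lemma2 hchar M hsym, adj_zero_iff_rank]
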